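/- For every infinite set A and every n ≥ 1, there is an injection from the set 𝒫(𝒪ₙ(A))^ω of all ω-sequences of subsets of 𝒪ₙ(A) into the power set 𝒫(ℬₙ(A)). -/

import Mathlib

open Set

/-- A finitary partition of the whole type `α`: a family of pairwise disjoint
nonempty finite subsets whose union is everything. -/
def IsFinitaryPartition {α : Type*} (P : Set (Set α)) : Prop :=
  (∀ p ∈ P, p.Finite) ∧ (∀ p ∈ P, p.Nonempty) ∧
    (∀ p ∈ P, ∀ q ∈ P, p ≠ q → Disjoint p q) ∧ ⋃₀ P = Set.univ

/-- The set of non-singleton blocks of a partition. -/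
def nsBlocks {α : Type*} (P : Set (Set α)) : Set (Set α) :=
  {p ∈ P | p.Nontrivial}

/-- `ℬₙ(A)`: finitary partitions with exactly `n` non-singleton blocks. -/
def BPart (α : Type*) (n : ℕ) : Set (Set (Set α)) :=
  {P | IsFinitaryPartition P ∧ (nsBlocks P).Finite ∧ (nsBlocks P).ncard = n}

/-- `ℬ_fin(A)`: finitary partitions with finitely many non-singleton blocks. -/
def BFinPart (α : Type*) : Set (Set (Set α)) :=
  {P | IsFinitaryPartition P ∧ (nsBlocks P).Finite}

/-- `𝒪ₙ(A)`: ordered `n`-tuples of pairwise disjoint finite subsets of `A`. -/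
def OTuple (α : Type*) (n : ℕ) : Set (Fin n → Set α) :=
  {p | (∀ i, (p i).Finite) ∧ ∀ i j, i ≠ j → Disjoint (p i) (p j)}

open Cardinal in
lemma mkO_le {α : Type*} [Infinite α] (n : ℕ) (hn : 1 ≤ n) : #(OTuple α n) ≤ #α := by
  have h1 : #(OTuple α n) ≤ #(Fin n → Finset α) := by
    refine ⟨⟨fun p i => (p.2.1 i).toFinset, ?_⟩⟩
    intro p q h
    apply Subtype.ext
    funext i
    have := congrFun h i
    exact (Set.Finite.toFinset_inj).mp this
  have h2 : #(Fin n → Finset α) = #(Finset α) ^ (n : Cardinal) := by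
    simp [Cardinal.mk_arrow]
  rw [h2, Cardinal.mk_finset_of_infinite] at h1
  rwa [Cardinal.power_natCast, Cardinal.power_nat_eq (Cardinal.aleph0_le_mk α) hn] at h1

open Cardinal in
lemma mk_le_BPart {α : Type*} [Infinite α] (n : ℕ) (hn : 1 ≤ n) :
    Cardinal.mk α ≤ Cardinal.mk (BPart α n) := by
  classical
  let f : ℕ ↪ α := Infinite.natEmbedding α
  set N : ℕ := 2 * n - 2 with hNdef
  set F : Set α := f '' {k | k ≤ N} with hFdef
  have hFfin : F.Finite := (Set.finite_Iic N).image f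
  -- basic facts
  have hfF : ∀ k : ℕ, f k ∈ F ↔ k ≤ N := by
    intro k
    constructor
    · rintro ⟨m, hm, hmk⟩
      rwa [← f.injective hmk]
    · intro hk; exact ⟨k, hk, rfl⟩
  set a0 : α := f N with ha0def
  have ha0F : a0 ∈ F := (hfF N).mpr le_rfl
  set pr : ℕ → Set α := fun i => {f (2 * i), f (2 * i + 1)} with hprdef
  have hprF : ∀ i < n - 1, pr i ⊆ F := by
    intro i hi x hx
    rcases hx with h | h
    · subst h; exact (hfF _).mpr (by omega)
    · simp only [Set.mem_singleton_iff] at h; subst h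
      exact (hfF _).mpr (by omega)
  have ha0pr : ∀ i < n - 1, a0 ∉ pr i := by
    intro i hi h
    rcases h with h | h
    · exact absurd (f.injective h) (by omega)
    · simp only [Set.mem_singleton_iff] at h
      exact absurd (f.injective h) (by omega)
  have hprnt : ∀ i, (pr i).Nontrivial := by
    intro i
    exact ⟨f (2 * i), Or.inl rfl, f (2 * i + 1), Or.inr rfl,
      fun h => by have := f.injective h; omega⟩
  have hmemf : ∀ k i, f k ∈ pr i → k = 2 * i ∨ k = 2 * i + 1 := by
    intro k i h
    rcases h with h | h
    · exact Or.inl (f.injective h)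
    · simp only [Set.mem_singleton_iff] at h
      exact Or.inr (f.injective h)
  have hprdisj : ∀ i j b, b ∈ pr i → b ∈ pr j → i = j := by
    intro i j b hb hb'
    have h1 : b = f (2 * i) ∨ b = f (2 * i + 1) := by
      rcases hb with h | h
      · exact Or.inl h
      · simp only [Set.mem_singleton_iff] at h; exact Or.inr h
    rcases h1 with rfl | rfl
    · rcases hmemf _ _ hb' with h | h <;> omega
    · rcases hmemf _ _ hb' with h | h <;> omega
  have hprinj : ∀ i j, pr i = pr j → i = j := by
    intro i j h
    have : f (2 * i) ∈ pr j := h ▸ Or.inl rfl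
    rcases this with h' | h'
    · have := f.injective h'; omega
    · simp only [Set.mem_singleton_iff] at h'
      have := f.injective h'; omega
  set sA : α → Set α := fun a => {a0, a} with hsAdef
  set P : α → Set (Set α) :=
    fun a => insert (sA a) ((pr '' Set.Iio (n - 1)) ∪ (fun x => ({x} : Set α)) '' ({a} ∪ F)ᶜ)
    with hPdef
  have hmem : ∀ a p, p ∈ P a ↔
      p = sA a ∨ (∃ i < n - 1, p = pr i) ∨ (∃ x, x ∉ ({a} ∪ F) ∧ p = {x}) := by
    intro a p
    simp only [hPdef, Set.mem_insert_iff, Set.mem_union, Set.mem_image, Set.mem_Iio,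
      Set.mem_compl_iff]
    constructor
    · rintro (h | ⟨i, hi, rfl⟩ | ⟨x, hx, rfl⟩)
      · exact Or.inl h
      · exact Or.inr (Or.inl ⟨i, hi, rfl⟩)
      · exact Or.inr (Or.inr ⟨x, hx, rfl⟩)
    · rintro (h | ⟨i, hi, rfl⟩ | ⟨x, hx, rfl⟩)
      · exact Or.inl h
      · exact Or.inr (Or.inl ⟨i, hi, rfl⟩)
      · exact Or.inr (Or.inr ⟨x, hx, rfl⟩)
  -- now the main construction
  have hmain : ∀ a ∉ F, P a ∈ BPart α n := by
    intro a ha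
    have haa0 : a ≠ a0 := fun h => ha (h ▸ ha0F)
    have hsAnt : (sA a).Nontrivial := ⟨a0, Or.inl rfl, a, Or.inr rfl, Ne.symm haa0⟩
    refine ⟨⟨?_, ?_, ?_, ?_⟩, ?_⟩
    · -- finite
      intro p hp
      rcases (hmem a p).mp hp with rfl | ⟨i, hi, rfl⟩ | ⟨x, hx, rfl⟩
      · exact (Set.finite_singleton a).insert a0
      · exact (Set.finite_singleton _).insert _
      · exact Set.finite_singleton x
    · -- nonempty
      intro p hp
      rcases (hmem a p).mp hp with rfl | ⟨i, hi, rfl⟩ | ⟨x, hx, rfl⟩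
      · exact ⟨a0, Or.inl rfl⟩
      · exact ⟨f (2 * i), Or.inl rfl⟩
      · exact ⟨x, rfl⟩
    · -- pairwise disjoint
      intro p hp q hq hpq
      rw [Set.disjoint_left]
      rcases (hmem a p).mp hp with rfl | ⟨i, hi, rfl⟩ | ⟨x, hx, rfl⟩ <;>
        rcases (hmem a q).mp hq with rfl | ⟨j, hj, rfl⟩ | ⟨y, hy, rfl⟩
      · exact absurd rfl hpq
      · rintro b (rfl | rfl)
        · exact ha0pr j hj
        · intro hb
          exact ha (hprF j hj hb)
      · rintro b (rfl | rfl) <;> simp only [Set.mem_singleton_iff]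
        · rintro rfl; exact hy (Or.inr ha0F)
        · rintro rfl; exact hy (Or.inl rfl)
      · rintro b hb hb'
        rcases hb' with rfl | rfl
        · exact ha0pr i hi hb
        · exact ha (hprF i hi hb)
      · intro b hb hb'
        exact hpq (hprdisj i j b hb hb' ▸ rfl)
      · rintro b hb
        simp only [Set.mem_singleton_iff]
        rintro rfl
        exact hy (Or.inr (hprF i hi hb))
      · rintro b rfl hb
        rcases hb with rfl | rfl
        · exact hx (Or.inr ha0F)
        · exact hx (Or.inl rfl)
      · rintro b rfl hb
        exact hx (Or.inr (hprF j hj hb))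
      · rintro b rfl hb
        simp only [Set.mem_singleton_iff] at hb
        exact hpq (hb ▸ rfl)
    · -- union is univ
      ext x
      simp only [Set.mem_sUnion, Set.mem_univ, iff_true]
      by_cases hx : x ∈ ({a} ∪ F : Set α)
      · rcases hx with rfl | hxF
        · exact ⟨sA x, (hmem x _).mpr (Or.inl rfl), Or.inr rfl⟩
        · obtain ⟨k, hk, rfl⟩ := hxF
          simp only [Set.mem_setOf_eq] at hk
          by_cases hkN : k = N
          · exact ⟨sA a, (hmem a _).mpr (Or.inl rfl), Or.inl (by rw [hkN])⟩
          · refine ⟨pr (k / 2), (hmem a _).mpr (Or.inr (Or.inl ⟨k / 2, by omega, rfl⟩)), ?_⟩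
            have : k = 2 * (k / 2) ∨ k = 2 * (k / 2) + 1 := by omega
            rcases this with h | h
            · exact Or.inl (by rw [← h])
            · exact Or.inr (by rw [← h]; exact Set.mem_singleton _)
      · exact ⟨{x}, (hmem a _).mpr (Or.inr (Or.inr ⟨x, hx, rfl⟩)), rfl⟩
    · -- nsBlocks finite and card n
      have hns : nsBlocks (P a) = insert (sA a) (pr '' Set.Iio (n - 1)) := by
        ext p
        simp only [nsBlocks, Set.mem_setOf_eq, Set.mem_insert_iff, Set.mem_image, Set.mem_Iio]
        constructor
        · rintro ⟨hp, hnt⟩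
          rcases (hmem a p).mp hp with rfl | ⟨i, hi, rfl⟩ | ⟨x, hx, rfl⟩
          · exact Or.inl rfl
          · exact Or.inr ⟨i, hi, rfl⟩
          · exact absurd hnt (Set.not_nontrivial_singleton)
        · rintro (rfl | ⟨i, hi, rfl⟩)
          · exact ⟨(hmem a _).mpr (Or.inl rfl), hsAnt⟩
          · exact ⟨(hmem a _).mpr (Or.inr (Or.inl ⟨i, hi, rfl⟩)), hprnt i⟩
      have hfin : (pr '' Set.Iio (n - 1)).Finite := (Set.finite_Iio _).image _
      have hnotmem : sA a ∉ pr '' Set.Iio (n - 1) := by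
        rintro ⟨i, hi, h⟩
        have : a ∈ pr i := h ▸ Or.inr rfl
        exact ha (hprF i hi this)
      have hcard : (pr '' Set.Iio (n - 1)).ncard = n - 1 := by
        rw [Set.ncard_image_of_injOn (fun i _ j _ h => hprinj i j h)]
        have : (Set.Iio (n - 1) : Set ℕ) = ↑(Finset.range (n - 1)) := by
          ext k; simp
        rw [this, Set.ncard_coe_finset, Finset.card_range]
      constructor
      · rw [hns]; exact hfin.insert _
      · rw [hns, Set.ncard_insert_of_notMem hnotmem hfin, hcard]
        omega
  -- build the injection
  have hmkF : #F < #α := lt_of_lt_of_le hFfin.lt_aleph0 (Cardinal.aleph0_le_mk α)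
  have hcompl : #(Fᶜ : Set α) = #α := Cardinal.mk_compl_of_infinite F hmkF
  rw [← hcompl]
  refine ⟨⟨fun a => ⟨P a.1, hmain a.1 a.2⟩, ?_⟩⟩
  rintro ⟨a, ha⟩ ⟨a', ha'⟩ h
  simp only [Subtype.mk.injEq] at h ⊢
  have haa0 : a ≠ a0 := fun hh => ha (hh ▸ ha0F)
  have h1 : sA a ∈ P a' := h ▸ (hmem a _).mpr (Or.inl rfl)
  rcases (hmem a' _).mp h1 with h2 | ⟨i, hi, h2⟩ | ⟨x, hx, h2⟩
  · -- {a0, a} = {a0, a'}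
    have : a ∈ sA a' := h2 ▸ (Or.inr rfl : a ∈ sA a)
    rcases this with h3 | h3
    · exact absurd h3 haa0
    · exact h3
  · have : a0 ∈ pr i := h2 ▸ (Or.inl rfl : a0 ∈ sA a)
    exact absurd this (ha0pr i hi)
  · have h3 : a0 ∈ ({x} : Set α) := h2 ▸ (Or.inl rfl : a0 ∈ sA a)
    have h4 : a ∈ ({x} : Set α) := h2 ▸ (Or.inr rfl : a ∈ sA a)
    simp only [Set.mem_singleton_iff] at h3 h4
    exact absurd (h4.trans h3.symm) haa0

/-- For every infinite set `A` and every `n ≥ 1`, there is an injection from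
the set `𝒫(𝒪ₙ(A))^ω` of ω-sequences of subsets of `𝒪ₙ(A)` into `𝒫(ℬₙ(A))`. -/
theorem statement5 {α : Type*} [Infinite α] (n : ℕ) (hn : 1 ≤ n) :
    ∃ H : (ℕ → Set ↥(OTuple α n)) → Set ↥(BPart α n), Function.Injective H := by
  have key : Cardinal.mk (ℕ → Set ↥(OTuple α n)) ≤ Cardinal.mk (Set ↥(BPart α n)) := by
    have h1 : Cardinal.mk ↥(OTuple α n) ≤ Cardinal.mk α := mkO_le n hn
    have h2 : Cardinal.mk α ≤ Cardinal.mk ↥(BPart α n) := mk_le_BPart n hn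
    have e1 : Cardinal.mk (ℕ → Set ↥(OTuple α n))
        = (2 ^ Cardinal.mk ↥(OTuple α n)) ^ (Cardinal.aleph0 : Cardinal) := by
      rw [Cardinal.mk_arrow]
      simp [Cardinal.mk_set]
    have e2 : Cardinal.mk (Set ↥(BPart α n)) = 2 ^ Cardinal.mk ↥(BPart α n) :=
      Cardinal.mk_set
    rw [e1, e2, ← Cardinal.power_mul]
    apply Cardinal.power_le_power_left (by norm_num)
    calc Cardinal.mk ↥(OTuple α n) * Cardinal.aleph0
        ≤ Cardinal.mk α * Cardinal.mk α :=
          mul_le_mul' h1 (Cardinal.aleph0_le_mk α)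
      _ = Cardinal.mk α := Cardinal.mul_eq_self (Cardinal.aleph0_le_mk α)
      _ ≤ Cardinal.mk ↥(BPart α n) := h2
  obtain ⟨e⟩ := Cardinal.le_def _ _ |>.mp key
  exact ⟨e, e.injective⟩
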